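/- arXiv:1908.02602 — 2 statements merged into one kernel-verified Lean document; each statement's English description precedes it below -/
import Mathlib

section
/- For every n ≥ 1, the double integral ∫₀^∞∫₀^∞ r₁^{n+1} r₂^{n+1} e^{-r₁²-r₂²} (log(r₁/r₂))² dr₁ dr₂ equals (1/8)·(Γ(n/2+1))²·ψ₁(n/2+1), where ψ₁ is the trigamma function. -/
open MeasureTheory Real

/-- The trigamma function `ψ₁(z) = (log Γ)''(z)`. -/
noncomputable def trigamma (z : ℝ) : ℝ :=
  deriv (deriv fun x : ℝ => Real.log (Real.Gamma x)) z

open Set Filter Asymptotics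
open scoped Topology

noncomputable section
namespace DblAux

/-- Base integrand `log^k t · e^{-t}`. -/
def F (k : ℕ) (t : ℝ) : ℝ := Real.log t ^ k * Real.exp (-t)

lemma F_succ (k : ℕ) (t : ℝ) : Real.log t * F k t = F (k + 1) t := by
  simp only [F, pow_succ]; ring

lemma F_cont (k : ℕ) : ContinuousOn (F k) (Ioi 0) := by
  refine ContinuousOn.mul ?_ (Real.continuous_exp.comp continuous_neg).continuousOn
  exact (Real.continuousOn_log.mono fun x hx => ne_of_gt hx).pow k

lemma F_top (k : ℕ) (c : ℝ) : F k =O[atTop] fun x => x ^ (-c) := by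
  induction k generalizing c with
  | zero =>
    have h : (fun t : ℝ => Real.exp (-t)) =O[atTop] fun x => x ^ (-c) := by
      simpa only [neg_one_mul] using (isLittleO_exp_neg_mul_rpow_atTop zero_lt_one (-c)).isBigO
    refine h.congr' (Eventually.of_forall fun t => ?_) EventuallyEq.rfl
    simp [F]
  | succ k ih =>
    have h := isBigO_rpow_top_log_smul (show c < c + 1 by linarith) (ih (c + 1))
    refine h.congr' (Eventually.of_forall fun t => ?_) EventuallyEq.rfl
    simp only [smul_eq_mul]
    exact F_succ k t

lemma F_bot (k : ℕ) : ∀ b : ℝ, 0 < b → F k =O[𝓝[>] (0:ℝ)] fun x => x ^ (-b) := by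
  induction k with
  | zero =>
    intro b hb
    refine IsBigO.of_bound 1 ?_
    filter_upwards [Ioo_mem_nhdsGT_of_mem (by simp [zero_lt_one] : (0:ℝ) ∈ Ico (0:ℝ) 1)]
      with x hx
    have hx0 : (0:ℝ) < x := hx.1
    have h1 : Real.exp (-x) ≤ 1 := Real.exp_le_one_iff.mpr (by linarith)
    have h2 : (1:ℝ) ≤ x ^ (-b) :=
      le_of_lt ((Real.one_lt_rpow_iff_of_pos hx0).mpr (Or.inr ⟨hx.2, by linarith⟩))
    simp only [F, pow_zero, one_mul, norm_of_nonneg (Real.exp_nonneg _), one_mul,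
      norm_of_nonneg (le_trans zero_le_one h2)]
    linarith
  | succ k ih =>
    intro b hb
    have h := isBigO_rpow_zero_log_smul (show b / 2 < b by linarith) (ih (b / 2) (by linarith))
    refine h.congr' (Eventually.of_forall fun t => ?_) EventuallyEq.rfl
    simp only [smul_eq_mul]
    exact F_succ k t

/-- The Mellin-type integral `J k s = ∫₀^∞ t^{s-1} log^k t e^{-t}`. -/
def J (k : ℕ) (s : ℝ) : ℝ := ∫ t in Ioi (0:ℝ), t ^ (s - 1) * F k t

lemma F_locInt (k : ℕ) : LocallyIntegrableOn (F k) (Ioi 0) :=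
  (F_cont k).locallyIntegrableOn measurableSet_Ioi

lemma J_integrable (k : ℕ) {s : ℝ} (hs : 0 < s) :
    IntegrableOn (fun t : ℝ => t ^ (s - 1) * F k t) (Ioi 0) :=
  mellin_convergent_of_isBigO_scalar (F_locInt k) (F_top k (s + 1)) (by linarith)
    (F_bot k (s / 2) (by linarith)) (by linarith)

/-- complex version -/
def Fc (k : ℕ) (t : ℝ) : ℂ := (F k t : ℂ)

lemma Fc_smul (k : ℕ) : (fun t => Real.log t • Fc k t) = Fc (k + 1) := by
  funext t
  simp only [Fc, Complex.real_smul, ← Complex.ofReal_mul, F_succ]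

lemma Fc_locInt (k : ℕ) : LocallyIntegrableOn (Fc k) (Ioi 0) :=
  (Complex.continuous_ofReal.comp_continuousOn (F_cont k)).locallyIntegrableOn measurableSet_Ioi

lemma ofReal_isBigO {k : ℕ} {l : Filter ℝ} {g : ℝ → ℝ} (h : F k =O[l] g) :
    (fun t => (F k t : ℂ)) =O[l] g :=
  isBigO_norm_left.mp (by simpa [Complex.norm_real] using h.norm_left)

lemma mellin_Fc_ofReal (k : ℕ) (s : ℝ) : mellin (Fc k) (s : ℂ) = ((J k s : ℝ) : ℂ) := by
  rw [mellin, J]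
  rw [show ((∫ t in Ioi (0:ℝ), t ^ (s - 1) * F k t : ℝ) : ℂ)
      = ∫ t in Ioi (0:ℝ), ((t ^ (s - 1) * F k t : ℝ) : ℂ) from (integral_ofReal).symm]
  refine setIntegral_congr_fun measurableSet_Ioi fun t ht => ?_
  rw [smul_eq_mul, Complex.ofReal_mul, Complex.ofReal_cpow (le_of_lt ht)]
  push_cast
  rfl

lemma J_hasDerivAt (k : ℕ) {s : ℝ} (hs : 0 < s) :
    HasDerivAt (J k) (J (k + 1) s) s := by
  have h := mellin_hasDerivAt_of_isBigO_rpow (f := Fc k) (s := (s : ℂ)) (a := s + 1) (b := s / 2)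
    (Fc_locInt k) (ofReal_isBigO (F_top k (s + 1)))
    (by simp only [Complex.ofReal_re]; linarith)
    (ofReal_isBigO (F_bot k (s / 2) (by linarith)))
    (by simp only [Complex.ofReal_re]; linarith)
  have h2 := h.2
  rw [Fc_smul k] at h2
  have h3 := h2.real_of_complex
  simp only [mellin_Fc_ofReal, Complex.ofReal_re] at h3
  exact h3

lemma J_zero_eq_Gamma {s : ℝ} (hs : 0 < s) : J 0 s = Real.Gamma s := by
  rw [Real.Gamma_eq_integral hs, J]
  refine setIntegral_congr_fun measurableSet_Ioi fun t ht => ?_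
  simp only [F, pow_zero, one_mul]
  ring

lemma Gamma_hasDerivAt {s : ℝ} (hs : 0 < s) : HasDerivAt Real.Gamma (J 1 s) s := by
  refine (J_hasDerivAt 0 hs).congr_of_eventuallyEq ?_
  filter_upwards [Ioi_mem_nhds hs] with x hx
  exact (J_zero_eq_Gamma hx).symm

lemma trigamma_eq {s : ℝ} (hs : 0 < s) :
    trigamma s = (J 2 s * Real.Gamma s - J 1 s ^ 2) / Real.Gamma s ^ 2 := by
  have hΓ := Real.Gamma_pos_of_pos hs
  have hne : Real.Gamma s ≠ 0 := hΓ.ne'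
  have hlog : ∀ x ∈ Ioi (0:ℝ),
      HasDerivAt (fun y : ℝ => Real.log (Real.Gamma y)) ((Real.Gamma x)⁻¹ * J 1 x) x := by
    intro x hx
    exact (Real.hasDerivAt_log (Real.Gamma_pos_of_pos hx).ne').comp x (Gamma_hasDerivAt hx)
  have hev : deriv (fun y : ℝ => Real.log (Real.Gamma y))
      =ᶠ[𝓝 s] fun x => (Real.Gamma x)⁻¹ * J 1 x := by
    filter_upwards [Ioi_mem_nhds hs] with x hx
    exact (hlog x hx).deriv
  have hd2 : HasDerivAt (fun x => (Real.Gamma x)⁻¹ * J 1 x)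
      (-(J 1 s) / Real.Gamma s ^ 2 * J 1 s + (Real.Gamma s)⁻¹ * J 2 s) s :=
    ((Gamma_hasDerivAt hs).inv hne).mul (J_hasDerivAt 1 hs)
  simp only [trigamma]
  rw [hev.deriv_eq, hd2.deriv]
  field_simp
  ring

lemma sub_pointwise (k n : ℕ) {x : ℝ} (hx : 0 < x) :
    (2 * x ^ ((2:ℝ) - 1)) * ((x ^ (2:ℝ)) ^ ((n:ℝ) / 2 + 1 - 1) * F k (x ^ (2:ℝ)))
      = 2 ^ (k + 1) * (x ^ (n + 1) * Real.exp (-x ^ 2) * Real.log x ^ k) := by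
  have e0 : x ^ ((2:ℝ)) = x ^ (2:ℕ) := by
    rw [← Real.rpow_natCast x 2]; norm_num
  have e2 : (x ^ ((2:ℝ))) ^ ((n:ℝ) / 2 + 1 - 1) = x ^ (n:ℕ) := by
    rw [← Real.rpow_mul hx.le, ← Real.rpow_natCast x n]
    congr 1; ring
  have e3 : Real.log (x ^ (2:ℕ)) = 2 * Real.log x := by
    rw [Real.log_pow]; push_cast; ring
  rw [show ((2:ℝ) - 1) = 1 by norm_num, Real.rpow_one, e2, F, e0, e3]
  ring

lemma J_eq_moment (k n : ℕ) :
    J k ((n:ℝ) / 2 + 1)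
      = 2 ^ (k + 1) * ∫ x in Ioi (0:ℝ), x ^ (n + 1) * Real.exp (-x ^ 2) * Real.log x ^ k := by
  have h := integral_comp_rpow_Ioi_of_pos
    (g := fun y => y ^ ((n:ℝ) / 2 + 1 - 1) * F k y) (p := 2) two_pos
  rw [J, ← h, ← MeasureTheory.integral_const_mul]
  refine setIntegral_congr_fun measurableSet_Ioi fun x hx => ?_
  rw [smul_eq_mul]
  exact sub_pointwise k n hx

lemma moment_integrable (k n : ℕ) :
    IntegrableOn (fun x : ℝ => x ^ (n + 1) * Real.exp (-x ^ 2) * Real.log x ^ k) (Ioi 0) := by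
  have h := (integrableOn_Ioi_comp_rpow_iff' (fun y => y ^ ((n:ℝ) / 2 + 1 - 1) * F k y)
      (p := 2) two_ne_zero).mpr (J_integrable k (by positivity))
  have h2 : IntegrableOn
      (fun x : ℝ => (2:ℝ) ^ k * (x ^ (n + 1) * Real.exp (-x ^ 2) * Real.log x ^ k)) (Ioi 0) := by
    refine h.congr_fun (fun x hx => ?_) measurableSet_Ioi
    refine mul_left_cancel₀ two_ne_zero ?_
    beta_reduce
    rw [smul_eq_mul, ← mul_assoc, sub_pointwise k n (hx : (0:ℝ) < x), pow_succ]
    ring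
  have h3 := h2.const_mul ((2:ℝ) ^ k)⁻¹
  refine IntegrableOn.congr_fun h3 (fun x hx => ?_) measurableSet_Ioi
  rw [inv_mul_cancel_left₀ (pow_ne_zero k two_ne_zero)]

lemma combo {f g h : ℝ → ℝ} (hf : IntegrableOn f (Ioi 0)) (hg : IntegrableOn g (Ioi 0))
    (hh : IntegrableOn h (Ioi 0)) (c d e : ℝ) :
    (∫ x in Ioi (0:ℝ), (c * f x - d * g x + e * h x))
      = c * (∫ x in Ioi (0:ℝ), f x) - d * (∫ x in Ioi (0:ℝ), g x)
        + e * ∫ x in Ioi (0:ℝ), h x := by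
  have h1 : IntegrableOn (fun x => c * f x - d * g x) (Ioi 0) :=
    (hf.const_mul c).sub (hg.const_mul d)
  calc (∫ x in Ioi (0:ℝ), (c * f x - d * g x + e * h x))
      = (∫ x in Ioi (0:ℝ), (c * f x - d * g x)) + ∫ x in Ioi (0:ℝ), e * h x :=
        integral_add h1 (hh.const_mul e)
    _ = ((∫ x in Ioi (0:ℝ), c * f x) - ∫ x in Ioi (0:ℝ), d * g x)
          + ∫ x in Ioi (0:ℝ), e * h x := by
        congr 1
        exact integral_sub (hf.const_mul c) (hg.const_mul d)
    _ = _ := by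
        rw [MeasureTheory.integral_const_mul, MeasureTheory.integral_const_mul,
          MeasureTheory.integral_const_mul]

end DblAux
end

open DblAux in
/-- `∫₀^∞∫₀^∞ r₁^{n+1} r₂^{n+1} e^{-r₁²-r₂²} (log(r₁/r₂))² dr₁ dr₂
      = (1/8)·(Γ(n/2+1))²·ψ₁(n/2+1)`. -/
theorem double_integral_eq_trigamma (n : ℕ) (hn : 1 ≤ n) :
    (∫ r₁ in Set.Ioi (0 : ℝ), ∫ r₂ in Set.Ioi (0 : ℝ),
        r₁ ^ (n + 1) * r₂ ^ (n + 1) * Real.exp (-r₁ ^ 2 - r₂ ^ 2) *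
          Real.log (r₁ / r₂) ^ 2) =
      1 / 8 * Real.Gamma ((n : ℝ) / 2 + 1) ^ 2 * trigamma ((n : ℝ) / 2 + 1) := by
  have ha : (0:ℝ) < (n:ℝ) / 2 + 1 := by positivity
  set M0 : ℝ := ∫ x in Set.Ioi (0:ℝ), x ^ (n + 1) * Real.exp (-x ^ 2) * Real.log x ^ 0 with hM0
  set M1 : ℝ := ∫ x in Set.Ioi (0:ℝ), x ^ (n + 1) * Real.exp (-x ^ 2) * Real.log x ^ 1 with hM1
  set M2 : ℝ := ∫ x in Set.Ioi (0:ℝ), x ^ (n + 1) * Real.exp (-x ^ 2) * Real.log x ^ 2 with hM2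
  have i0 := moment_integrable 0 n
  have i1 := moment_integrable 1 n
  have i2 := moment_integrable 2 n
  have inner : ∀ r₁ ∈ Set.Ioi (0:ℝ),
      (∫ r₂ in Set.Ioi (0:ℝ), r₁ ^ (n + 1) * r₂ ^ (n + 1) * Real.exp (-r₁ ^ 2 - r₂ ^ 2) *
          Real.log (r₁ / r₂) ^ 2)
        = (r₁ ^ (n + 1) * Real.exp (-r₁ ^ 2)) *
            (Real.log r₁ ^ 2 * M0 - 2 * Real.log r₁ * M1 + M2) := by
    intro r₁ hr₁
    have hpt : ∀ r₂ ∈ Set.Ioi (0:ℝ),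
        r₁ ^ (n + 1) * r₂ ^ (n + 1) * Real.exp (-r₁ ^ 2 - r₂ ^ 2) * Real.log (r₁ / r₂) ^ 2
          = (r₁ ^ (n + 1) * Real.exp (-r₁ ^ 2)) *
              (Real.log r₁ ^ 2 * (r₂ ^ (n + 1) * Real.exp (-r₂ ^ 2) * Real.log r₂ ^ 0)
                - 2 * Real.log r₁ * (r₂ ^ (n + 1) * Real.exp (-r₂ ^ 2) * Real.log r₂ ^ 1)
                + 1 * (r₂ ^ (n + 1) * Real.exp (-r₂ ^ 2) * Real.log r₂ ^ 2)) := by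
      intro r₂ hr₂
      rw [Real.log_div (ne_of_gt hr₁) (ne_of_gt hr₂),
        show -r₁ ^ 2 - r₂ ^ 2 = (-r₁ ^ 2) + (-r₂ ^ 2) by ring, Real.exp_add]
      ring
    rw [setIntegral_congr_fun measurableSet_Ioi hpt, MeasureTheory.integral_const_mul,
      combo i0 i1 i2]
    ring
  rw [setIntegral_congr_fun measurableSet_Ioi inner]
  have hout : ∀ r₁ ∈ Set.Ioi (0:ℝ),
      (r₁ ^ (n + 1) * Real.exp (-r₁ ^ 2)) *
          (Real.log r₁ ^ 2 * M0 - 2 * Real.log r₁ * M1 + M2)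
        = M0 * (r₁ ^ (n + 1) * Real.exp (-r₁ ^ 2) * Real.log r₁ ^ 2)
            - (2 * M1) * (r₁ ^ (n + 1) * Real.exp (-r₁ ^ 2) * Real.log r₁ ^ 1)
            + M2 * (r₁ ^ (n + 1) * Real.exp (-r₁ ^ 2) * Real.log r₁ ^ 0) := by
    intro r₁ hr₁; ring
  rw [setIntegral_congr_fun measurableSet_Ioi hout, combo i2 i1 i0, ← hM0, ← hM1, ← hM2]
  have hΓpos := Real.Gamma_pos_of_pos ha
  have hΓ : Real.Gamma ((n:ℝ) / 2 + 1) = 2 * M0 := by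
    rw [← J_zero_eq_Gamma ha, J_eq_moment 0 n, hM0]; norm_num
  have hJ1 : J 1 ((n:ℝ) / 2 + 1) = 4 * M1 := by
    rw [J_eq_moment 1 n, hM1]; norm_num
  have hJ2 : J 2 ((n:ℝ) / 2 + 1) = 8 * M2 := by
    rw [J_eq_moment 2 n, hM2]; norm_num
  have hM0ne : (2:ℝ) * M0 ≠ 0 := by rw [← hΓ]; exact hΓpos.ne'
  rw [trigamma_eq ha, hJ1, hJ2, hΓ]
  have hM0ne' : M0 ≠ 0 := right_ne_zero_of_mul hM0ne
  field_simp
  ring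
end

section
/- For φ ∈ BMO(ℝⁿ) with finite quadratic BMO norm ‖φ‖_*, the heat-semigroup norm satisfies ‖φ‖_H ≤ C√n·‖φ‖_* for an absolute constant C, where ‖φ‖_H = sup_{(y,t)} ((H_t*φ²)(y) − ((H_t*φ)(y))²)^{1/2}. -/
open MeasureTheory Real Set Metric

/-- The heat kernel on ℝⁿ. -/
noncomputable def heatKernel (n : ℕ) (t : ℝ) (y : EuclideanSpace ℝ (Fin n)) : ℝ :=
  (4 * π * t) ^ (-(n : ℝ) / 2) * Real.exp (-‖y‖ ^ 2 / (4 * t))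

namespace HeatAux

lemma vol_ball_toReal {n : ℕ} (hn : 1 ≤ n) (c : EuclideanSpace ℝ (Fin n)) {r : ℝ} (hr : 0 ≤ r) :
    (volume (Metric.ball c r)).toReal
      = r ^ n * (Real.sqrt π ^ n / Real.Gamma ((n : ℝ) / 2 + 1)) := by
  haveI : Nonempty (Fin n) := ⟨⟨0, hn⟩⟩
  have hΓ : 0 < Real.Gamma ((n : ℝ) / 2 + 1) := Real.Gamma_pos_of_pos (by positivity)
  rw [EuclideanSpace.volume_ball, Fintype.card_fin, ENNReal.toReal_mul, ENNReal.toReal_pow,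
    ENNReal.toReal_ofReal hr, ENNReal.toReal_ofReal (by positivity)]

lemma rpow_shift {n : ℕ} (hn : 1 ≤ n) (N : ℕ) :
    (2:ℝ) ^ (((N:ℝ) + 1) / n) * 2 ^ (-(1:ℝ) / n) = 2 ^ ((N:ℝ) / n) := by
  rw [← Real.rpow_add (by norm_num)]
  congr 1
  rw [← add_div]
  norm_num

lemma vol_ball_pos {n : ℕ} (c : EuclideanSpace ℝ (Fin n)) {r : ℝ} (hr : 0 < r) :
    0 < (volume (Metric.ball c r)).toReal :=
  ENNReal.toReal_pos (measure_ball_pos volume c hr).ne' measure_ball_lt_top.ne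

variable {n : ℕ} {φ : EuclideanSpace ℝ (Fin n) → ℝ}

lemma intOn_ball (hL2 : ∀ (c : EuclideanSpace ℝ (Fin n)) (r : ℝ), 0 < r →
      MemLp φ 2 (volume.restrict (Metric.ball c r)))
    (c : EuclideanSpace ℝ (Fin n)) {r : ℝ} (hr : 0 < r) :
    IntegrableOn φ (Metric.ball c r) volume ∧
      IntegrableOn (fun x => φ x ^ 2) (Metric.ball c r) volume := by
  haveI : IsFiniteMeasure (volume.restrict (Metric.ball c r)) :=
    ⟨by rw [Measure.restrict_apply_univ]; exact measure_ball_lt_top⟩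
  exact ⟨(hL2 c r hr).integrable (by norm_num), (hL2 c r hr).integrable_sq⟩

/-- expansion of the quadratic integral -/
lemma expand_int (hL2 : ∀ (c : EuclideanSpace ℝ (Fin n)) (r : ℝ), 0 < r →
      MemLp φ 2 (volume.restrict (Metric.ball c r)))
    (c : EuclideanSpace ℝ (Fin n)) {r : ℝ} (hr : 0 < r) (b : ℝ) :
    ∫ x in Metric.ball c r, (φ x - b) ^ 2
      = (∫ x in Metric.ball c r, φ x ^ 2) - 2 * b * (∫ x in Metric.ball c r, φ x)
        + (volume (Metric.ball c r)).toReal * b ^ 2 := by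
  obtain ⟨h1, h2⟩ := intOn_ball hL2 c hr
  haveI : IsFiniteMeasure (volume.restrict (Metric.ball c r)) :=
    ⟨by rw [Measure.restrict_apply_univ]; exact measure_ball_lt_top⟩
  have key : ∀ x, (φ x - b) ^ 2 = (φ x ^ 2 - 2 * b * φ x) + b ^ 2 := by intro x; ring
  simp only [key]
  have ha : IntegrableOn (fun x => φ x ^ 2 - 2 * b * φ x) (Metric.ball c r) volume :=
    h2.sub (h1.const_mul (2 * b))
  have e1 : ∫ x in Metric.ball c r, (φ x ^ 2 - 2 * b * φ x + b ^ 2)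
      = (∫ x in Metric.ball c r, (φ x ^ 2 - 2 * b * φ x)) + ∫ _x in Metric.ball c r, (b ^ 2 : ℝ) :=
    integral_add ha (integrable_const _)
  have e2 : ∫ x in Metric.ball c r, (φ x ^ 2 - 2 * b * φ x)
      = (∫ x in Metric.ball c r, φ x ^ 2) - ∫ x in Metric.ball c r, 2 * b * φ x :=
    integral_sub h2 (h1.const_mul (2 * b))
  rw [e1, e2, MeasureTheory.integral_const_mul, setIntegral_const]
  simp [smul_eq_mul, mul_comm, measureReal_def]

lemma avg_eq (c : EuclideanSpace ℝ (Fin n)) (r : ℝ) (f : EuclideanSpace ℝ (Fin n) → ℝ) :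
    (⨍ x in Metric.ball c r, f x)
      = ((volume (Metric.ball c r)).toReal)⁻¹ * ∫ x in Metric.ball c r, f x := by
  rw [setAverage_eq]; rfl

/-- first key : integral of square against arbitrary constant -/
lemma key1
    (hL2 : ∀ (c : EuclideanSpace ℝ (Fin n)) (r : ℝ), 0 < r →
      MemLp φ 2 (volume.restrict (Metric.ball c r)))
    {M : ℝ}
    (hVar : ∀ (c : EuclideanSpace ℝ (Fin n)) (r : ℝ), 0 < r →
      (⨍ x in Metric.ball c r, (φ x) ^ 2) - (⨍ x in Metric.ball c r, φ x) ^ 2 ≤ M ^ 2)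
    (c : EuclideanSpace ℝ (Fin n)) {r : ℝ} (hr : 0 < r) (b : ℝ) :
    ∫ x in Metric.ball c r, (φ x - b) ^ 2
      ≤ (volume (Metric.ball c r)).toReal *
          (M ^ 2 + ((⨍ x in Metric.ball c r, φ x) - b) ^ 2) := by
  have hV := vol_ball_pos c hr
  have hkey := hVar c r hr
  rw [avg_eq, avg_eq] at hkey
  rw [avg_eq, expand_int hL2 c hr b]
  set V := (volume (Metric.ball c r)).toReal with hVdef
  set S1 := ∫ x in Metric.ball c r, φ x with hS1
  set S2 := ∫ x in Metric.ball c r, φ x ^ 2 with hS2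
  have hVne : V ≠ 0 := hV.ne'
  have h2' : S2 ≤ V * M ^ 2 + V⁻¹ * S1 ^ 2 := by
    have h := mul_le_mul_of_nonneg_left hkey hV.le
    have e : V * (V⁻¹ * S2 - (V⁻¹ * S1) ^ 2) = S2 - V⁻¹ * S1 ^ 2 := by
      field_simp
    rw [e] at h; linarith
  have e2 : V * (M ^ 2 + (V⁻¹ * S1 - b) ^ 2)
      = V * M ^ 2 + V⁻¹ * S1 ^ 2 - 2 * b * S1 + V * b ^ 2 := by
    field_simp; ring
  rw [e2]; linarith

/-- second key: Jensen -/
lemma key2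
    (hL2 : ∀ (c : EuclideanSpace ℝ (Fin n)) (r : ℝ), 0 < r →
      MemLp φ 2 (volume.restrict (Metric.ball c r)))
    (c : EuclideanSpace ℝ (Fin n)) {r : ℝ} (hr : 0 < r) (b : ℝ) :
    (volume (Metric.ball c r)).toReal * ((⨍ x in Metric.ball c r, φ x) - b) ^ 2
      ≤ ∫ x in Metric.ball c r, (φ x - b) ^ 2 := by
  have hV := vol_ball_pos c hr
  have h0 : 0 ≤ ∫ x in Metric.ball c r, (φ x - (⨍ x in Metric.ball c r, φ x)) ^ 2 :=
    setIntegral_nonneg measurableSet_ball (fun x _ => sq_nonneg _)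
  rw [expand_int hL2 c hr, avg_eq] at h0
  rw [expand_int hL2 c hr, avg_eq]
  set V := (volume (Metric.ball c r)).toReal with hVdef
  set S1 := ∫ x in Metric.ball c r, φ x with hS1
  set S2 := ∫ x in Metric.ball c r, φ x ^ 2 with hS2
  have hVne : V ≠ 0 := hV.ne'
  have e0 : S2 - 2 * (V⁻¹ * S1) * S1 + V * (V⁻¹ * S1) ^ 2 = S2 - V⁻¹ * S1 ^ 2 := by
    field_simp; ring
  rw [e0] at h0
  have e1 : V * (V⁻¹ * S1 - b) ^ 2 = V⁻¹ * S1 ^ 2 - 2 * b * S1 + V * b ^ 2 := by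
    field_simp; ring
  rw [e1]; linarith


/-- one chaining step -/
lemma step (hn : 1 ≤ n)
    (hL2 : ∀ (c : EuclideanSpace ℝ (Fin n)) (r : ℝ), 0 < r →
      MemLp φ 2 (volume.restrict (Metric.ball c r)))
    {M : ℝ} (hM : 0 ≤ M)
    (hVar : ∀ (c : EuclideanSpace ℝ (Fin n)) (r : ℝ), 0 < r →
      (⨍ x in Metric.ball c r, (φ x) ^ 2) - (⨍ x in Metric.ball c r, φ x) ^ 2 ≤ M ^ 2)
    (y : EuclideanSpace ℝ (Fin n)) {r r' : ℝ} (hr : 0 < r) (hrr : r ≤ r')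
    (hstep : r' ≤ r * 2 ^ ((1 : ℝ) / n)) :
    |(⨍ x in Metric.ball y r, φ x) - (⨍ x in Metric.ball y r', φ x)| ≤ Real.sqrt 2 * M := by
  have hr' : 0 < r' := lt_of_lt_of_le hr hrr
  have hV := vol_ball_pos y hr
  have hV' := vol_ball_pos y hr'
  -- V * d^2 ≤ V' * M^2
  have h1 : (volume (Metric.ball y r)).toReal *
      ((⨍ x in Metric.ball y r, φ x) - (⨍ x in Metric.ball y r', φ x)) ^ 2
      ≤ ∫ x in Metric.ball y r, (φ x - (⨍ x in Metric.ball y r', φ x)) ^ 2 :=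
    key2 hL2 y hr _
  have h2 : ∫ x in Metric.ball y r, (φ x - (⨍ x in Metric.ball y r', φ x)) ^ 2
      ≤ ∫ x in Metric.ball y r', (φ x - (⨍ x in Metric.ball y r', φ x)) ^ 2 := by
    refine setIntegral_mono_set ?_ ?_ (HasSubset.Subset.eventuallyLE (Metric.ball_subset_ball hrr))
    · obtain ⟨i1, i2⟩ := intOn_ball hL2 y hr'
      have : ∀ x, (φ x - (⨍ x in Metric.ball y r', φ x)) ^ 2
          = (φ x ^ 2 - (2 * (⨍ x in Metric.ball y r', φ x)) * φ x)
            + (⨍ x in Metric.ball y r', φ x) ^ 2 := by intro x; ring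
      simp only [this]
      exact (i2.sub (i1.const_mul _)).add (integrableOn_const measure_ball_lt_top.ne)
    · filter_upwards with x using sq_nonneg _
  have h3 : ∫ x in Metric.ball y r', (φ x - (⨍ x in Metric.ball y r', φ x)) ^ 2
      ≤ (volume (Metric.ball y r')).toReal * (M ^ 2 + 0) := by
    have := key1 hL2 hVar y hr' (⨍ x in Metric.ball y r', φ x)
    simpa using this
  -- volume ratio
  have hvol : (volume (Metric.ball y r')).toReal
      ≤ 2 * (volume (Metric.ball y r)).toReal := by
    rw [vol_ball_toReal hn y hr.le, vol_ball_toReal hn y hr'.le]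
    have hκ : 0 ≤ Real.sqrt π ^ n / Real.Gamma ((n : ℝ) / 2 + 1) := by
      have hΓ : 0 < Real.Gamma ((n : ℝ) / 2 + 1) := Real.Gamma_pos_of_pos (by positivity)
      positivity
    have hpow : r' ^ n ≤ 2 * r ^ n := by
      calc r' ^ n ≤ (r * 2 ^ ((1 : ℝ) / n)) ^ n :=
            pow_le_pow_left₀ hr'.le hstep n
        _ = r ^ n * ((2 : ℝ) ^ ((1 : ℝ) / n)) ^ n := by rw [mul_pow]
        _ = 2 * r ^ n := by
            rw [← Real.rpow_natCast ((2:ℝ) ^ ((1:ℝ)/n)) n, ← Real.rpow_mul (by norm_num)]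
            rw [one_div, inv_mul_cancel₀ (by exact_mod_cast Nat.pos_of_ne_zero (by omega) |>.ne' : (n:ℝ) ≠ 0)]
            rw [Real.rpow_one]; ring
    nlinarith [pow_nonneg hr.le n]
  -- combine
  have hd2 : ((⨍ x in Metric.ball y r, φ x) - (⨍ x in Metric.ball y r', φ x)) ^ 2
      ≤ 2 * M ^ 2 := by
    have hc : (volume (Metric.ball y r)).toReal *
        ((⨍ x in Metric.ball y r, φ x) - (⨍ x in Metric.ball y r', φ x)) ^ 2
        ≤ (volume (Metric.ball y r)).toReal * (2 * M ^ 2) := by nlinarith [sq_nonneg M]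
    exact le_of_mul_le_mul_left hc hV
  have : |(⨍ x in Metric.ball y r, φ x) - (⨍ x in Metric.ball y r', φ x)|
      = Real.sqrt ((((⨍ x in Metric.ball y r, φ x) - (⨍ x in Metric.ball y r', φ x))) ^ 2) :=
    (Real.sqrt_sq_eq_abs _).symm
  rw [this]
  calc Real.sqrt _ ≤ Real.sqrt (2 * M ^ 2) := Real.sqrt_le_sqrt hd2
    _ = Real.sqrt 2 * M := by
        rw [Real.sqrt_mul (by norm_num), Real.sqrt_sq hM]

/-- chaining: `N` steps -/
lemma chain (hn : 1 ≤ n)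
    (hL2 : ∀ (c : EuclideanSpace ℝ (Fin n)) (r : ℝ), 0 < r →
      MemLp φ 2 (volume.restrict (Metric.ball c r)))
    {M : ℝ} (hM : 0 ≤ M)
    (hVar : ∀ (c : EuclideanSpace ℝ (Fin n)) (r : ℝ), 0 < r →
      (⨍ x in Metric.ball c r, (φ x) ^ 2) - (⨍ x in Metric.ball c r, φ x) ^ 2 ≤ M ^ 2)
    (y : EuclideanSpace ℝ (Fin n)) :
    ∀ N : ℕ, ∀ r r' : ℝ, 0 < r → r ≤ r' → r' ≤ r * 2 ^ ((N : ℝ) / n) →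
      |(⨍ x in Metric.ball y r, φ x) - (⨍ x in Metric.ball y r', φ x)|
        ≤ N * (Real.sqrt 2 * M) := by
  intro N
  induction N with
  | zero =>
      intro r r' hr hrr h
      have : r' ≤ r := by simpa using h
      have : r' = r := le_antisymm this hrr
      simp [this]
  | succ N ih =>
      intro r r' hr hrr h
      have hnR : (0:ℝ) < (n:ℝ) := by exact_mod_cast Nat.pos_of_ne_zero (by omega)
      set r'' := max r (r' * 2 ^ (-(1 : ℝ) / n)) with hr''def
      have h1 : r ≤ r'' := le_max_left _ _
      have hr''pos : 0 < r'' := lt_of_lt_of_le hr h1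
      have hone : (1:ℝ) ≤ 2 ^ ((N : ℝ) / n) := by
        have := Real.rpow_le_rpow_of_exponent_le (show (1:ℝ) ≤ 2 by norm_num)
          (show (0:ℝ) ≤ (N:ℝ)/n by positivity)
        simpa using this
      have h4 : r'' ≤ r' := by
        refine max_le hrr ?_
        have hle1 : (2:ℝ) ^ (-(1:ℝ)/n) ≤ 1 := by
          apply Real.rpow_le_one_of_one_le_of_nonpos (by norm_num)
          rw [neg_div]
          simp [div_nonneg, hnR.le]
        nlinarith [lt_of_lt_of_le hr hrr]
      have h' : r' ≤ r * 2 ^ (((N:ℝ) + 1) / n) := by push_cast at h; exact h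
      have hpneg : (0:ℝ) < 2 ^ (-(1:ℝ)/n) := Real.rpow_pos_of_pos (by norm_num) _
      have h3 : r'' ≤ r * 2 ^ ((N : ℝ) / n) := by
        refine max_le (by nlinarith) ?_
        have := mul_le_mul_of_nonneg_right h' hpneg.le
        rw [mul_assoc, rpow_shift hn N] at this
        exact this
      have h5 : r' ≤ r'' * 2 ^ ((1:ℝ)/n) := by
        have h6 : r' * 2 ^ (-(1:ℝ)/n) ≤ r'' := le_max_right _ _
        have hp : (0:ℝ) < 2 ^ ((1:ℝ)/n) := Real.rpow_pos_of_pos (by norm_num) _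
        have hcancel : r' * 2 ^ (-(1:ℝ)/n) * 2 ^ ((1:ℝ)/n) = r' := by
          rw [mul_assoc, ← Real.rpow_add (by norm_num), neg_div, one_div, neg_add_cancel,
            Real.rpow_zero, mul_one]
        nlinarith [mul_le_mul_of_nonneg_right h6 hp.le]
      have hIH := ih r r'' hr h1 h3
      have hstep := step hn hL2 hM hVar y hr''pos h4 h5
      calc |(⨍ x in Metric.ball y r, φ x) - (⨍ x in Metric.ball y r', φ x)|
          ≤ |(⨍ x in Metric.ball y r, φ x) - (⨍ x in Metric.ball y r'', φ x)|
            + |(⨍ x in Metric.ball y r'', φ x) - (⨍ x in Metric.ball y r', φ x)| :=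
            abs_sub_le _ _ _
        _ ≤ N * (Real.sqrt 2 * M) + Real.sqrt 2 * M := add_le_add hIH hstep
        _ = ((N + 1 : ℕ) : ℝ) * (Real.sqrt 2 * M) := by push_cast; ring


lemma dist_avg_le (hn : 1 ≤ n)
    (hL2 : ∀ (c : EuclideanSpace ℝ (Fin n)) (r : ℝ), 0 < r →
      MemLp φ 2 (volume.restrict (Metric.ball c r)))
    {M : ℝ} (hM : 0 ≤ M)
    (hVar : ∀ (c : EuclideanSpace ℝ (Fin n)) (r : ℝ), 0 < r →
      (⨍ x in Metric.ball c r, (φ x) ^ 2) - (⨍ x in Metric.ball c r, φ x) ^ 2 ≤ M ^ 2)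
    (y : EuclideanSpace ℝ (Fin n)) {r rb : ℝ} (hr : 0 < r) (hrb : 0 < rb) (hle : r ≤ rb) :
    |(⨍ x in Metric.ball y r, φ x) - (⨍ x in Metric.ball y rb, φ x)|
      ≤ ((n : ℝ) * Real.logb 2 (rb / r) + 1) * (Real.sqrt 2 * M) := by
  have hnR : (0:ℝ) < (n:ℝ) := by exact_mod_cast Nat.pos_of_ne_zero (by omega)
  set L := Real.logb 2 (rb / r) with hL
  have hdiv1 : (1:ℝ) ≤ rb / r := (one_le_div hr).2 hle
  have hL0 : 0 ≤ L := Real.logb_nonneg (by norm_num) hdiv1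
  set N := ⌈(n : ℝ) * L⌉₊ with hN
  have hceil : (n : ℝ) * L ≤ N := Nat.le_ceil _
  have hchain := chain hn hL2 hM hVar y N r rb hr hle ?_
  · have hNlt : (N : ℝ) < (n : ℝ) * L + 1 := Nat.ceil_lt_add_one (by positivity)
    calc |(⨍ x in Metric.ball y r, φ x) - (⨍ x in Metric.ball y rb, φ x)|
        ≤ N * (Real.sqrt 2 * M) := hchain
      _ ≤ ((n : ℝ) * L + 1) * (Real.sqrt 2 * M) := by
          have : (0:ℝ) ≤ Real.sqrt 2 * M := by positivity
          nlinarith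
  · have h2L : rb / r = 2 ^ L := (Real.rpow_logb (by norm_num) (by norm_num)
      (by positivity)).symm
    have hexp : L ≤ (N : ℝ) / n := (le_div_iff₀ hnR).2 (by linarith [hceil])
    have : (2:ℝ) ^ L ≤ 2 ^ ((N : ℝ) / n) :=
      Real.rpow_le_rpow_of_exponent_le (by norm_num) hexp
    calc rb = r * (rb / r) := by field_simp
      _ = r * 2 ^ L := by rw [h2L]
      _ ≤ r * 2 ^ ((N : ℝ) / n) := by nlinarith

lemma dist_avg (hn : 1 ≤ n)
    (hL2 : ∀ (c : EuclideanSpace ℝ (Fin n)) (r : ℝ), 0 < r →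
      MemLp φ 2 (volume.restrict (Metric.ball c r)))
    {M : ℝ} (hM : 0 ≤ M)
    (hVar : ∀ (c : EuclideanSpace ℝ (Fin n)) (r : ℝ), 0 < r →
      (⨍ x in Metric.ball c r, (φ x) ^ 2) - (⨍ x in Metric.ball c r, φ x) ^ 2 ≤ M ^ 2)
    (y : EuclideanSpace ℝ (Fin n)) {r rb : ℝ} (hr : 0 < r) (hrb : 0 < rb) :
    |(⨍ x in Metric.ball y r, φ x) - (⨍ x in Metric.ball y rb, φ x)|
      ≤ ((n : ℝ) * |Real.logb 2 (r / rb)| + 1) * (Real.sqrt 2 * M) := by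
  rcases le_total r rb with hle | hle
  · have := dist_avg_le hn hL2 hM hVar y hr hrb hle
    have habs : |Real.logb 2 (r / rb)| = Real.logb 2 (rb / r) := by
      have : Real.logb 2 (r / rb) = -Real.logb 2 (rb / r) := by
        rw [show r / rb = (rb / r)⁻¹ by rw [inv_div], Real.logb_inv]
      rw [this, abs_neg, abs_of_nonneg (Real.logb_nonneg (by norm_num) ((one_le_div hr).2 hle))]
    rw [habs]
    exact this
  · have := dist_avg_le hn hL2 hM hVar y hrb hr hle
    rw [abs_sub_comm]
    have habs : |Real.logb 2 (r / rb)| = Real.logb 2 (r / rb) :=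
      abs_of_nonneg (Real.logb_nonneg (by norm_num) ((one_le_div hrb).2 hle))
    rw [habs]
    exact this

lemma ball_bound (hn : 1 ≤ n)
    (hL2 : ∀ (c : EuclideanSpace ℝ (Fin n)) (r : ℝ), 0 < r →
      MemLp φ 2 (volume.restrict (Metric.ball c r)))
    {M : ℝ} (hM : 0 ≤ M)
    (hVar : ∀ (c : EuclideanSpace ℝ (Fin n)) (r : ℝ), 0 < r →
      (⨍ x in Metric.ball c r, (φ x) ^ 2) - (⨍ x in Metric.ball c r, φ x) ^ 2 ≤ M ^ 2)
    (y : EuclideanSpace ℝ (Fin n)) {r rb : ℝ} (hr : 0 < r) (hrb : 0 < rb) :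
    ∫ x in Metric.ball y r, (φ x - (⨍ x in Metric.ball y rb, φ x)) ^ 2
      ≤ (volume (Metric.ball y r)).toReal *
          (M ^ 2 * (1 + 2 * ((n : ℝ) * |Real.logb 2 (r / rb)| + 1) ^ 2)) := by
  have h1 := key1 hL2 hVar y hr (⨍ x in Metric.ball y rb, φ x)
  have hd := dist_avg hn hL2 hM hVar y hr hrb
  have hd2 : ((⨍ x in Metric.ball y r, φ x) - (⨍ x in Metric.ball y rb, φ x)) ^ 2
      ≤ ((n : ℝ) * |Real.logb 2 (r / rb)| + 1) ^ 2 * (2 * M ^ 2) := by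
    have habs : ((⨍ x in Metric.ball y r, φ x) - (⨍ x in Metric.ball y rb, φ x)) ^ 2
        = |(⨍ x in Metric.ball y r, φ x) - (⨍ x in Metric.ball y rb, φ x)| ^ 2 :=
      (sq_abs _).symm
    rw [habs]
    calc |(⨍ x in Metric.ball y r, φ x) - (⨍ x in Metric.ball y rb, φ x)| ^ 2
        ≤ (((n : ℝ) * |Real.logb 2 (r / rb)| + 1) * (Real.sqrt 2 * M)) ^ 2 := by
          apply pow_le_pow_left₀ (abs_nonneg _) hd
      _ = ((n : ℝ) * |Real.logb 2 (r / rb)| + 1) ^ 2 * (Real.sqrt 2 ^ 2 * M ^ 2) := by ring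
      _ = ((n : ℝ) * |Real.logb 2 (r / rb)| + 1) ^ 2 * (2 * M ^ 2) := by
          rw [Real.sq_sqrt (by norm_num : (0:ℝ) ≤ 2)]
  have hV : 0 ≤ (volume (Metric.ball y r)).toReal := ENNReal.toReal_nonneg
  calc ∫ x in Metric.ball y r, (φ x - (⨍ x in Metric.ball y rb, φ x)) ^ 2
      ≤ (volume (Metric.ball y r)).toReal *
        (M ^ 2 + ((⨍ x in Metric.ball y r, φ x) - (⨍ x in Metric.ball y rb, φ x)) ^ 2) := h1
    _ ≤ (volume (Metric.ball y r)).toReal *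
        (M ^ 2 * (1 + 2 * ((n : ℝ) * |Real.logb 2 (r / rb)| + 1) ^ 2)) := by
        apply mul_le_mul_of_nonneg_left _ hV
        nlinarith [hd2]


lemma expIoi (q : ℝ) :
    ∫⁻ u in Set.Ioi q, ENNReal.ofReal (Real.exp (-u)) = ENNReal.ofReal (Real.exp (-q)) := by
  have hint : IntegrableOn (fun u : ℝ => Real.exp (-u)) (Set.Ioi q) := by
    simpa using exp_neg_integrableOn_Ioi q one_pos
  rw [← ofReal_integral_eq_lintegral_ofReal hint
    (ae_of_all _ fun u => (Real.exp_pos _).le), integral_exp_neg_Ioi]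

lemma layer {n : ℕ} {t : ℝ} (ht : 0 < t) (y : EuclideanSpace ℝ (Fin n))
    (f : EuclideanSpace ℝ (Fin n) → ℝ) (hf0 : ∀ x, 0 ≤ f x) (hfm : AEMeasurable f volume) :
    ∫⁻ x, ENNReal.ofReal (heatKernel n t (y - x) * f x) =
      ∫⁻ u in Set.Ioi (0:ℝ),
        ENNReal.ofReal ((4 * π * t) ^ (-(n:ℝ)/2) * Real.exp (-u)) *
          ∫⁻ x in Metric.ball y (2 * Real.sqrt (t * u)), ENNReal.ofReal (f x) := by
  set c₀ : ℝ := (4 * π * t) ^ (-(n:ℝ)/2) with hc₀def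
  have hc₀ : 0 < c₀ := Real.rpow_pos_of_pos (by positivity) _
  set S : Set (EuclideanSpace ℝ (Fin n) × ℝ) := {p | ‖y - p.1‖ ^ 2 / (4 * t) < p.2} with hSdef
  have hS : MeasurableSet S := by
    apply measurableSet_lt
    · exact (((continuous_const.sub continuous_fst).norm.pow 2).div_const _).measurable
    · exact measurable_snd
  set G : EuclideanSpace ℝ (Fin n) → ℝ → ENNReal := fun x u =>
    S.indicator (fun _ => (1:ENNReal)) (x, u) *
      (ENNReal.ofReal (Real.exp (-u)) * ENNReal.ofReal (c₀ * f x)) with hGdef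
  have hG : AEMeasurable (Function.uncurry G)
      ((volume : Measure (EuclideanSpace ℝ (Fin n))).prod (volume.restrict (Set.Ioi (0:ℝ)))) := by
    refine AEMeasurable.mul ?_ (AEMeasurable.fun_mul ?_ ?_)
    · exact ((measurable_one.indicator hS)).aemeasurable
    · exact (ENNReal.measurable_ofReal.comp (measurable_exp.comp measurable_snd.neg)).aemeasurable
    · exact ENNReal.measurable_ofReal.comp_aemeasurable ((hfm.const_mul c₀).comp_fst)
  have step1 : ∫⁻ x, ENNReal.ofReal (heatKernel n t (y - x) * f x)
      = ∫⁻ x, ∫⁻ u in Set.Ioi (0:ℝ), G x u := by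
    refine lintegral_congr fun x => ?_
    have hq : 0 ≤ ‖y - x‖ ^ 2 / (4 * t) := by positivity
    have e1 : ∀ u : ℝ, G x u = (Set.Ioi (‖y - x‖ ^ 2 / (4 * t))).indicator
        (fun u => ENNReal.ofReal (Real.exp (-u)) * ENNReal.ofReal (c₀ * f x)) u := by
      intro u
      by_cases h : (x, u) ∈ S
      · have hu : u ∈ Set.Ioi (‖y - x‖ ^ 2 / (4 * t)) := h
        rw [hGdef]
        simp only [Set.indicator_of_mem h, Set.indicator_of_mem hu, one_mul]
      · have hu : u ∉ Set.Ioi (‖y - x‖ ^ 2 / (4 * t)) := h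
        rw [hGdef]
        simp only [Set.indicator_of_notMem h, Set.indicator_of_notMem hu, zero_mul]
    rw [show (∫⁻ u in Set.Ioi (0:ℝ), G x u) = ∫⁻ u in Set.Ioi (0:ℝ),
      (Set.Ioi (‖y - x‖ ^ 2 / (4 * t))).indicator
        (fun u => ENNReal.ofReal (Real.exp (-u)) * ENNReal.ofReal (c₀ * f x)) u from
      lintegral_congr fun u => by rw [e1]]
    rw [lintegral_indicator measurableSet_Ioi, Measure.restrict_restrict measurableSet_Ioi,
      show Set.Ioi (‖y - x‖ ^ 2 / (4 * t)) ∩ Set.Ioi (0:ℝ) = Set.Ioi (‖y - x‖ ^ 2 / (4 * t)) by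
        rw [Set.Ioi_inter_Ioi, max_eq_left hq]]
    rw [lintegral_mul_const' _ _ ENNReal.ofReal_ne_top, expIoi,
      ← ENNReal.ofReal_mul (Real.exp_pos _).le]
    congr 1
    rw [heatKernel, hc₀def, neg_div]
    ring
  have step3 : ∫⁻ u in Set.Ioi (0:ℝ), ∫⁻ x, G x u
      = ∫⁻ u in Set.Ioi (0:ℝ),
          ENNReal.ofReal (c₀ * Real.exp (-u)) *
            ∫⁻ x in Metric.ball y (2 * Real.sqrt (t * u)), ENNReal.ofReal (f x) := by
    refine setLIntegral_congr_fun measurableSet_Ioi (fun u hu => ?_)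
    have hu : (0:ℝ) < u := hu
    have hball : ∀ x : EuclideanSpace ℝ (Fin n),
        (x, u) ∈ S ↔ x ∈ Metric.ball y (2 * Real.sqrt (t * u)) := by
      intro x
      have h4t : (0:ℝ) < 4 * t := by positivity
      have hsq : Real.sqrt (4 * t * u) = 2 * Real.sqrt (t * u) := by
        rw [show (4:ℝ) * t * u = 2 ^ 2 * (t * u) by ring,
          Real.sqrt_mul (by positivity : (0:ℝ) ≤ 2 ^ 2) (t * u),
          Real.sqrt_sq (by norm_num : (0:ℝ) ≤ 2)]
      constructor
      · intro h
        have h' : ‖y - x‖ ^ 2 < 4 * t * u := by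
          have := (div_lt_iff₀ h4t).1 h
          nlinarith
        rw [Metric.mem_ball, dist_eq_norm, ← hsq]
        rw [show ‖x - y‖ = ‖y - x‖ from norm_sub_rev _ _]
        exact (Real.lt_sqrt (norm_nonneg _)).2 h'
      · intro h
        rw [Metric.mem_ball, dist_eq_norm, ← hsq,
          show ‖x - y‖ = ‖y - x‖ from norm_sub_rev _ _] at h
        have h' : ‖y - x‖ ^ 2 < 4 * t * u := (Real.lt_sqrt (norm_nonneg _)).1 h
        have : ‖y - x‖ ^ 2 / (4 * t) < u := by rw [div_lt_iff₀ h4t]; nlinarith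
        exact this
    have e2 : ∀ x, G x u = (Metric.ball y (2 * Real.sqrt (t * u))).indicator
        (fun x => ENNReal.ofReal (Real.exp (-u)) * ENNReal.ofReal (c₀ * f x)) x := by
      intro x
      by_cases h : (x, u) ∈ S
      · have hx : x ∈ Metric.ball y (2 * Real.sqrt (t * u)) := (hball x).1 h
        rw [hGdef]
        simp only [Set.indicator_of_mem h, Set.indicator_of_mem hx, one_mul]
      · have hx : x ∉ Metric.ball y (2 * Real.sqrt (t * u)) := fun hx => h ((hball x).2 hx)
        rw [hGdef]
        simp only [Set.indicator_of_notMem h, Set.indicator_of_notMem hx, zero_mul]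
    rw [show (∫⁻ x, G x u) = ∫⁻ x, (Metric.ball y (2 * Real.sqrt (t * u))).indicator
        (fun x => ENNReal.ofReal (Real.exp (-u)) * ENNReal.ofReal (c₀ * f x)) x from
      lintegral_congr fun x => by rw [e2]]
    rw [lintegral_indicator measurableSet_ball]
    have e3 : ∀ x, ENNReal.ofReal (Real.exp (-u)) * ENNReal.ofReal (c₀ * f x)
        = (ENNReal.ofReal (c₀ * Real.exp (-u))) * ENNReal.ofReal (f x) := by
      intro x
      rw [← ENNReal.ofReal_mul (Real.exp_pos _).le,
        ← ENNReal.ofReal_mul (by positivity : (0:ℝ) ≤ c₀ * Real.exp (-u))]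
      congr 1
      ring
    rw [show (∫⁻ x in Metric.ball y (2 * Real.sqrt (t * u)),
        ENNReal.ofReal (Real.exp (-u)) * ENNReal.ofReal (c₀ * f x))
      = ∫⁻ x in Metric.ball y (2 * Real.sqrt (t * u)),
        ENNReal.ofReal (c₀ * Real.exp (-u)) * ENNReal.ofReal (f x) from
      lintegral_congr fun x => by rw [e3]]
    rw [lintegral_const_mul' _ _ ENNReal.ofReal_ne_top]
  rw [step1, lintegral_lintegral_swap hG, step3]


lemma volKey {n : ℕ} (hn : 1 ≤ n) {t u : ℝ} (ht : 0 < t) (hu : 0 < u)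
    (y : EuclideanSpace ℝ (Fin n)) :
    (4 * π * t) ^ (-(n:ℝ)/2) * (volume (Metric.ball y (2 * Real.sqrt (t * u)))).toReal
      = u ^ ((n:ℝ)/2) / Real.Gamma ((n:ℝ)/2 + 1) := by
  rw [vol_ball_toReal hn y (by positivity)]
  have e0 : 2 * Real.sqrt (t * u) = Real.sqrt (4 * (t * u)) := by
    rw [show (4:ℝ) * (t * u) = 2 ^ 2 * (t * u) by ring,
      Real.sqrt_mul (by positivity : (0:ℝ) ≤ 2 ^ 2) (t * u),
      Real.sqrt_sq (by norm_num : (0:ℝ) ≤ 2)]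
  have e1 : (2 * Real.sqrt (t * u)) ^ n = (4 * (t * u)) ^ ((n:ℝ)/2) := by
    rw [e0, Real.sqrt_eq_rpow, ← Real.rpow_natCast ((4 * (t * u)) ^ ((1:ℝ)/2)) n,
      ← Real.rpow_mul (by positivity)]
    congr 1
    ring
  have e2 : Real.sqrt π ^ n = π ^ ((n:ℝ)/2) := by
    rw [Real.sqrt_eq_rpow, ← Real.rpow_natCast (π ^ ((1:ℝ)/2)) n,
      ← Real.rpow_mul (by positivity)]
    congr 1
    ring
  rw [e1, e2]
  have key : (4 * π * t) ^ (-(n:ℝ)/2) * ((4 * (t * u)) ^ ((n:ℝ)/2) * π ^ ((n:ℝ)/2))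
      = u ^ ((n:ℝ)/2) := by
    have h1 : (4*(t*u)) ^ ((n:ℝ)/2) * π ^ ((n:ℝ)/2) = ((4*π*t)*u) ^ ((n:ℝ)/2) := by
      rw [← Real.mul_rpow (by positivity) (by positivity)]
      congr 1
      ring
    have h2 : ((4*π*t)*u) ^ ((n:ℝ)/2) = (4*π*t) ^ ((n:ℝ)/2) * u ^ ((n:ℝ)/2) :=
      Real.mul_rpow (by positivity) (by positivity)
    have h3 : (4*π*t) ^ (-(n:ℝ)/2) * (4*π*t) ^ ((n:ℝ)/2) = 1 := by
      rw [← Real.rpow_add (by positivity), neg_div, neg_add_cancel, Real.rpow_zero]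
    calc (4 * π * t) ^ (-(n:ℝ)/2) * ((4 * (t * u)) ^ ((n:ℝ)/2) * π ^ ((n:ℝ)/2))
        = (4 * π * t) ^ (-(n:ℝ)/2) * ((4*π*t) ^ ((n:ℝ)/2) * u ^ ((n:ℝ)/2)) := by
          rw [h1, h2]
      _ = ((4*π*t) ^ (-(n:ℝ)/2) * (4*π*t) ^ ((n:ℝ)/2)) * u ^ ((n:ℝ)/2) := by ring
      _ = u ^ ((n:ℝ)/2) := by rw [h3, one_mul]
  calc (4 * π * t) ^ (-(n:ℝ)/2) * ((4 * (t * u)) ^ ((n:ℝ)/2)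
        * (π ^ ((n:ℝ)/2) / Real.Gamma ((n:ℝ)/2 + 1)))
      = ((4 * π * t) ^ (-(n:ℝ)/2) * ((4 * (t * u)) ^ ((n:ℝ)/2) * π ^ ((n:ℝ)/2)))
          / Real.Gamma ((n:ℝ)/2 + 1) := by ring
    _ = u ^ ((n:ℝ)/2) / Real.Gamma ((n:ℝ)/2 + 1) := by rw [key]

lemma gInt {p : ℝ} (hp : -1 < p) :
    IntegrableOn (fun u : ℝ => Real.exp (-u) * u ^ p) (Set.Ioi (0:ℝ)) := by
  have := Real.GammaIntegral_convergent (show (0:ℝ) < p + 1 by linarith)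
  simpa using this

lemma gVal {p : ℝ} (hp : -1 < p) :
    ∫ u in Set.Ioi (0:ℝ), Real.exp (-u) * u ^ p = Real.Gamma (p + 1) := by
  rw [Real.Gamma_eq_integral (show (0:ℝ) < p + 1 by linarith)]
  simp

lemma heat_cont {n : ℕ} {t : ℝ} (ht : 0 < t) (y : EuclideanSpace ℝ (Fin n)) :
    Continuous fun x : EuclideanSpace ℝ (Fin n) => heatKernel n t (y - x) := by
  unfold heatKernel
  exact continuous_const.mul
    (Real.continuous_exp.comp (((continuous_const.sub continuous_id).norm.pow 2).neg.div_const _))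

lemma heat_pos {n : ℕ} {t : ℝ} (ht : 0 < t) (y x : EuclideanSpace ℝ (Fin n)) :
    0 < heatKernel n t (y - x) :=
  mul_pos (Real.rpow_pos_of_pos (by positivity) _) (Real.exp_pos _)

lemma massOne {n : ℕ} (hn : 1 ≤ n) {t : ℝ} (ht : 0 < t) (y : EuclideanSpace ℝ (Fin n)) :
    Integrable (fun x => heatKernel n t (y - x)) volume ∧
      ∫ x, heatKernel n t (y - x) = 1 := by
  have hs : (0:ℝ) < (n:ℝ)/2 := by
    have : (0:ℝ) < (n:ℝ) := by exact_mod_cast Nat.pos_of_ne_zero (by omega)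
    linarith
  have hΓ : 0 < Real.Gamma ((n:ℝ)/2 + 1) := Real.Gamma_pos_of_pos (by linarith)
  have hlay := layer ht y (fun _ => 1) (fun _ => zero_le_one) aemeasurable_const
  have hL : (∫⁻ x, ENNReal.ofReal (heatKernel n t (y - x) * 1)) = 1 := by
    rw [hlay]
    have e1 : ∀ u ∈ Set.Ioi (0:ℝ),
        ENNReal.ofReal ((4 * π * t) ^ (-(n:ℝ)/2) * Real.exp (-u)) *
          ∫⁻ x in Metric.ball y (2 * Real.sqrt (t * u)), ENNReal.ofReal ((1:ℝ))
        = ENNReal.ofReal (Real.exp (-u) * u ^ ((n:ℝ)/2) / Real.Gamma ((n:ℝ)/2 + 1)) := by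
      intro u hu
      have hu : (0:ℝ) < u := hu
      rw [ENNReal.ofReal_one, setLIntegral_one,
        ← ENNReal.ofReal_toReal (measure_ball_lt_top (x := y)
          (r := 2 * Real.sqrt (t * u))).ne,
        ← ENNReal.ofReal_mul (by positivity)]
      congr 1
      rw [show (4 * π * t) ^ (-(n:ℝ)/2) * Real.exp (-u)
            * (volume (Metric.ball y (2 * Real.sqrt (t * u)))).toReal
          = Real.exp (-u) * ((4 * π * t) ^ (-(n:ℝ)/2)
            * (volume (Metric.ball y (2 * Real.sqrt (t * u)))).toReal) by ring,
        volKey hn ht hu y]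
      ring
    rw [setLIntegral_congr_fun measurableSet_Ioi e1]
    have hint : IntegrableOn
        (fun u : ℝ => Real.exp (-u) * u ^ ((n:ℝ)/2) / Real.Gamma ((n:ℝ)/2 + 1))
        (Set.Ioi (0:ℝ)) := (gInt (by linarith)).div_const _
    rw [← ofReal_integral_eq_lintegral_ofReal hint
      ((ae_restrict_iff' measurableSet_Ioi).2 (ae_of_all _ fun u hu => by
        have hu : (0:ℝ) < u := hu
        positivity))]
    rw [integral_div, gVal (by linarith : (-1:ℝ) < (n:ℝ)/2), div_self hΓ.ne']
    exact ENNReal.ofReal_one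
  simp only [mul_one] at hL
  have hnn : ∀ᵐ x ∂(volume : Measure (EuclideanSpace ℝ (Fin n))),
      0 ≤ heatKernel n t (y - x) := ae_of_all _ fun x => (heat_pos ht y x).le
  have hint : Integrable (fun x => heatKernel n t (y - x)) volume := by
    refine ⟨(heat_cont ht y).aestronglyMeasurable, ?_⟩
    rw [hasFiniteIntegral_iff_ofReal hnn, hL]
    exact ENNReal.one_lt_top
  refine ⟨hint, ?_⟩
  rw [integral_eq_lintegral_of_nonneg_ae hnn (heat_cont ht y).aestronglyMeasurable, hL]
  rfl

lemma two_log_le {w : ℝ} (hw : 1 ≤ w) : 2 * Real.log w ≤ w - w⁻¹ := by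
  have hx : 0 ≤ Real.log w := Real.log_nonneg hw
  have hsinh : Real.log w ≤ Real.sinh (Real.log w) := by
    rcases eq_or_lt_of_le hx with h | h
    · simp [← h]
    · exact (Real.self_lt_sinh_iff.2 h).le
  have h2 : Real.sinh (Real.log w) = (w - w⁻¹) / 2 := by
    rw [Real.sinh_eq, Real.exp_log (by linarith : (0:ℝ) < w), Real.exp_neg,
      Real.exp_log (by linarith : (0:ℝ) < w)]
  rw [h2] at hsinh
  linarith


lemma sq_log_le {v : ℝ} (hv : 0 < v) : Real.log v ^ 2 ≤ (v - 1) ^ 2 / v := by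
  have main : ∀ x : ℝ, 1 ≤ x → Real.log x ^ 2 ≤ (x - 1) ^ 2 / x := by
    intro x hx
    have hx0 : (0:ℝ) < x := by linarith
    set w := Real.sqrt x with hw
    have hw1 : 1 ≤ w := by
      rw [hw, show (1:ℝ) = Real.sqrt 1 by simp]
      exact Real.sqrt_le_sqrt hx
    have hw0 : 0 < w := by linarith
    have hlog : Real.log x = 2 * Real.log w := by
      rw [hw, Real.log_sqrt hx0.le]
      ring
    have hkey := two_log_le hw1
    have hlog0 : 0 ≤ Real.log x := Real.log_nonneg hx
    have hww : w ^ 2 = x := Real.sq_sqrt hx0.le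
    have hwne : w ≠ 0 := hw0.ne'
    have hsq : Real.log x ^ 2 ≤ (w - w⁻¹) ^ 2 := by
      have h1 : 0 ≤ w - w⁻¹ := by
        have : w⁻¹ ≤ 1 := by
          rw [inv_le_one_iff₀]
          right; exact hw1
        linarith
      rw [hlog]
      nlinarith [two_log_le hw1, Real.log_nonneg hw1]
    have hident : (w - w⁻¹) ^ 2 = (x - 1) ^ 2 / x := by
      rw [← hww]
      field_simp
    rw [← hident]
    exact hsq
  rcases le_total 1 v with h | h
  · exact main v h
  · have hv1 : 1 ≤ v⁻¹ := (one_le_inv₀ hv).2 h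
    have := main v⁻¹ hv1
    rw [Real.log_inv] at this
    have e : (v⁻¹ - 1) ^ 2 / v⁻¹ = (v - 1) ^ 2 / v := by
      field_simp
      ring
    calc Real.log v ^ 2 = (-Real.log v) ^ 2 := by ring
      _ ≤ (v⁻¹ - 1) ^ 2 / v⁻¹ := this
      _ = (v - 1) ^ 2 / v := e

lemma log_div_sq_le {u m : ℝ} (hu : 0 < u) (hm : 0 < m) :
    Real.log (u / m) ^ 2 ≤ (u - m) ^ 2 / (u * m) := by
  have h := sq_log_le (show (0:ℝ) < u / m by positivity)
  have e : (u / m - 1) ^ 2 / (u / m) = (u - m) ^ 2 / (u * m) := by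
    field_simp
  rw [e] at h
  exact h


noncomputable def kfun (n : ℕ) (M : ℝ) (u : ℝ) : ℝ :=
  Real.exp (-u) * u ^ ((n:ℝ)/2) / Real.Gamma ((n:ℝ)/2 + 1) *
    (M ^ 2 * (5 + 3 * (n:ℝ) ^ 2 * Real.log (u / ((n:ℝ)/2)) ^ 2))

noncomputable def Bfun (n : ℕ) (M : ℝ) (u : ℝ) : ℝ :=
  M ^ 2 / Real.Gamma ((n:ℝ)/2 + 1) * (5 - 6 * (n:ℝ) ^ 2) * (Real.exp (-u) * u ^ ((n:ℝ)/2))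
  + M ^ 2 / Real.Gamma ((n:ℝ)/2 + 1) * (3 * (n:ℝ) ^ 2 / ((n:ℝ)/2)) *
      (Real.exp (-u) * u ^ ((n:ℝ)/2 + 1))
  + M ^ 2 / Real.Gamma ((n:ℝ)/2 + 1) * (3 * (n:ℝ) ^ 2 * ((n:ℝ)/2)) *
      (Real.exp (-u) * u ^ ((n:ℝ)/2 - 1))

lemma npos {n : ℕ} (hn : 1 ≤ n) : (0:ℝ) < (n:ℝ)/2 := by
  have : (0:ℝ) < (n:ℝ) := by exact_mod_cast Nat.pos_of_ne_zero (by omega)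
  linarith

lemma kfun_nonneg {n : ℕ} (hn : 1 ≤ n) (M : ℝ) {u : ℝ} (hu : 0 < u) : 0 ≤ kfun n M u := by
  have hΓ : 0 < Real.Gamma ((n:ℝ)/2 + 1) := Real.Gamma_pos_of_pos (by linarith [npos hn])
  unfold kfun
  positivity

lemma kfun_le_Bfun {n : ℕ} (hn : 1 ≤ n) (M : ℝ) {u : ℝ} (hu : 0 < u) :
    kfun n M u ≤ Bfun n M u := by
  have hs : (0:ℝ) < (n:ℝ)/2 := npos hn
  have hΓ : 0 < Real.Gamma ((n:ℝ)/2 + 1) := Real.Gamma_pos_of_pos (by linarith)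
  set s : ℝ := (n:ℝ)/2 with hsdef
  have h1 : u ^ s = u ^ (s - 1) * u := by
    conv_lhs => rw [show s = s - 1 + 1 by ring]
    rw [Real.rpow_add_one hu.ne']
  have h2 : u ^ (s + 1) = u ^ (s - 1) * u ^ 2 := by
    rw [Real.rpow_add_one hu.ne', h1]
    ring
  set P : ℝ := u ^ (s - 1) with hPdef
  have hP : 0 < P := Real.rpow_pos_of_pos hu _
  set L : ℝ := Real.log (u / s) with hLdef
  have hlog : L ^ 2 * (u * s) ≤ (u - s) ^ 2 := by
    have h := log_div_sq_le hu hs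
    rw [← hLdef] at h
    exact (le_div_iff₀ (by positivity)).1 h
  have he : 0 < Real.exp (-u) := Real.exp_pos _
  unfold kfun Bfun
  rw [← hsdef, ← hLdef, h1, h2, ← hPdef]
  have expand : M ^ 2 / Real.Gamma (s + 1) * (5 - 6 * (n:ℝ) ^ 2) * (Real.exp (-u) * (P * u))
      + M ^ 2 / Real.Gamma (s + 1) * (3 * (n:ℝ) ^ 2 / s) * (Real.exp (-u) * (P * u ^ 2))
      + M ^ 2 / Real.Gamma (s + 1) * (3 * (n:ℝ) ^ 2 * s) * (Real.exp (-u) * P)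
      - Real.exp (-u) * (P * u) / Real.Gamma (s + 1) * (M ^ 2 * (5 + 3 * (n:ℝ) ^ 2 * L ^ 2))
      = M ^ 2 / Real.Gamma (s + 1) * (3 * (n:ℝ) ^ 2 / s) * (Real.exp (-u) * P) *
          ((u - s) ^ 2 - L ^ 2 * (u * s)) := by
    field_simp
    ring
  have hprod : 0 ≤ M ^ 2 / Real.Gamma (s + 1) * (3 * (n:ℝ) ^ 2 / s) * (Real.exp (-u) * P) *
      ((u - s) ^ 2 - L ^ 2 * (u * s)) := by
    apply mul_nonneg
    · positivity
    · linarith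
  linarith [expand, hprod]

lemma Bfun_integrableOn {n : ℕ} (hn : 1 ≤ n) (M : ℝ) :
    IntegrableOn (Bfun n M) (Set.Ioi (0:ℝ)) volume := by
  have hs : (0:ℝ) < (n:ℝ)/2 := npos hn
  exact (((gInt (by linarith : (-1:ℝ) < (n:ℝ)/2)).const_mul _).add
    ((gInt (by linarith : (-1:ℝ) < (n:ℝ)/2 + 1)).const_mul _)).add
    ((gInt (by linarith : (-1:ℝ) < (n:ℝ)/2 - 1)).const_mul _)

lemma Bfun_integral {n : ℕ} (hn : 1 ≤ n) (M : ℝ) :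
    ∫ u in Set.Ioi (0:ℝ), Bfun n M u = (5 + 6 * (n:ℝ)) * M ^ 2 := by
  have hs : (0:ℝ) < (n:ℝ)/2 := npos hn
  have hΓ : 0 < Real.Gamma ((n:ℝ)/2 + 1) := Real.Gamma_pos_of_pos (by linarith)
  have i1 := gInt (by linarith : (-1:ℝ) < (n:ℝ)/2)
  have i2 := gInt (by linarith : (-1:ℝ) < (n:ℝ)/2 + 1)
  have i3 := gInt (by linarith : (-1:ℝ) < (n:ℝ)/2 - 1)
  set c1 : ℝ := M ^ 2 / Real.Gamma ((n:ℝ)/2 + 1) * (5 - 6 * (n:ℝ) ^ 2) with hc1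
  set c2 : ℝ := M ^ 2 / Real.Gamma ((n:ℝ)/2 + 1) * (3 * (n:ℝ) ^ 2 / ((n:ℝ)/2)) with hc2
  set c3 : ℝ := M ^ 2 / Real.Gamma ((n:ℝ)/2 + 1) * (3 * (n:ℝ) ^ 2 * ((n:ℝ)/2)) with hc3
  have e1 : ∫ u in Set.Ioi (0:ℝ),
      (c1 * (Real.exp (-u) * u ^ ((n:ℝ)/2)) + c2 * (Real.exp (-u) * u ^ ((n:ℝ)/2 + 1))
        + c3 * (Real.exp (-u) * u ^ ((n:ℝ)/2 - 1)))
      = (∫ u in Set.Ioi (0:ℝ), (c1 * (Real.exp (-u) * u ^ ((n:ℝ)/2))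
          + c2 * (Real.exp (-u) * u ^ ((n:ℝ)/2 + 1))))
        + ∫ u in Set.Ioi (0:ℝ), c3 * (Real.exp (-u) * u ^ ((n:ℝ)/2 - 1)) :=
    integral_add ((i1.const_mul _).add (i2.const_mul _)) (i3.const_mul _)
  have e2 : ∫ u in Set.Ioi (0:ℝ),
      (c1 * (Real.exp (-u) * u ^ ((n:ℝ)/2)) + c2 * (Real.exp (-u) * u ^ ((n:ℝ)/2 + 1)))
      = (∫ u in Set.Ioi (0:ℝ), c1 * (Real.exp (-u) * u ^ ((n:ℝ)/2)))
        + ∫ u in Set.Ioi (0:ℝ), c2 * (Real.exp (-u) * u ^ ((n:ℝ)/2 + 1)) :=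
    integral_add (i1.const_mul _) (i2.const_mul _)
  rw [show (∫ u in Set.Ioi (0:ℝ), Bfun n M u)
      = ∫ u in Set.Ioi (0:ℝ),
        (c1 * (Real.exp (-u) * u ^ ((n:ℝ)/2)) + c2 * (Real.exp (-u) * u ^ ((n:ℝ)/2 + 1))
          + c3 * (Real.exp (-u) * u ^ ((n:ℝ)/2 - 1))) from rfl, e1, e2,
    MeasureTheory.integral_const_mul, MeasureTheory.integral_const_mul,
    MeasureTheory.integral_const_mul,
    gVal (by linarith : (-1:ℝ) < (n:ℝ)/2), gVal (by linarith : (-1:ℝ) < (n:ℝ)/2 + 1),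
    gVal (by linarith : (-1:ℝ) < (n:ℝ)/2 - 1)]
  rw [show (n:ℝ)/2 - 1 + 1 = (n:ℝ)/2 by ring]
  have hG2 : Real.Gamma ((n:ℝ)/2 + 1 + 1) = ((n:ℝ)/2 + 1) * Real.Gamma ((n:ℝ)/2 + 1) :=
    Real.Gamma_add_one (by positivity)
  have hG1 : Real.Gamma ((n:ℝ)/2 + 1) = ((n:ℝ)/2) * Real.Gamma ((n:ℝ)/2) :=
    Real.Gamma_add_one hs.ne'
  have hGs : Real.Gamma ((n:ℝ)/2) = Real.Gamma ((n:ℝ)/2 + 1) / ((n:ℝ)/2) := by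
    rw [hG1]
    field_simp
  rw [hG2, hGs, hc1, hc2, hc3]
  have hne : Real.Gamma ((n:ℝ)/2 + 1) ≠ 0 := hΓ.ne'
  have hn0 : ((n:ℝ)) ≠ 0 := by
    have : (0:ℝ) < (n:ℝ) := by linarith
    exact this.ne'
  revert hne
  generalize Real.Gamma ((n:ℝ)/2 + 1) = G
  intro hne
  field_simp
  ring

lemma kfun_integrableOn {n : ℕ} (hn : 1 ≤ n) (M : ℝ) :
    IntegrableOn (kfun n M) (Set.Ioi (0:ℝ)) volume := by
  have hs : (0:ℝ) < (n:ℝ)/2 := npos hn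
  have hΓ : 0 < Real.Gamma ((n:ℝ)/2 + 1) := Real.Gamma_pos_of_pos (by linarith)
  have hcont : ContinuousOn (kfun n M) (Set.Ioi (0:ℝ)) := by
    unfold kfun
    apply ContinuousOn.mul
    · apply ContinuousOn.div_const
      exact (Real.continuous_exp.comp continuous_neg).continuousOn.mul
        (continuousOn_id.rpow_const fun x hx => Or.inl (ne_of_gt hx))
    · apply continuousOn_const.mul
      apply continuousOn_const.add
      apply continuousOn_const.mul
      apply ContinuousOn.pow
      apply ContinuousOn.log (continuousOn_id.div_const _)
      intro x hx
      have hx : (0:ℝ) < x := hx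
      positivity
  -- dominating function
  set D : ℝ → ℝ := fun u => |M ^ 2 / Real.Gamma ((n:ℝ)/2 + 1) * (5 - 6 * (n:ℝ) ^ 2)|
      * (Real.exp (-u) * u ^ ((n:ℝ)/2))
    + M ^ 2 / Real.Gamma ((n:ℝ)/2 + 1) * (3 * (n:ℝ) ^ 2 / ((n:ℝ)/2)) *
        (Real.exp (-u) * u ^ ((n:ℝ)/2 + 1))
    + M ^ 2 / Real.Gamma ((n:ℝ)/2 + 1) * (3 * (n:ℝ) ^ 2 * ((n:ℝ)/2)) *
        (Real.exp (-u) * u ^ ((n:ℝ)/2 - 1)) with hDdef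
  have hDint : IntegrableOn D (Set.Ioi (0:ℝ)) volume := by
    exact (((gInt (by linarith : (-1:ℝ) < (n:ℝ)/2)).const_mul _).add
      ((gInt (by linarith : (-1:ℝ) < (n:ℝ)/2 + 1)).const_mul _)).add
      ((gInt (by linarith : (-1:ℝ) < (n:ℝ)/2 - 1)).const_mul _)
  refine Integrable.mono' hDint (hcont.aestronglyMeasurable measurableSet_Ioi) ?_
  refine (ae_restrict_iff' measurableSet_Ioi).2 (ae_of_all _ fun u hu => ?_)
  have hu : (0:ℝ) < u := hu
  rw [Real.norm_eq_abs, abs_of_nonneg (kfun_nonneg hn M hu)]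
  have hBD : Bfun n M u ≤ D u := by
    rw [hDdef]
    unfold Bfun
    have : M ^ 2 / Real.Gamma ((n:ℝ)/2 + 1) * (5 - 6 * (n:ℝ) ^ 2)
        ≤ |M ^ 2 / Real.Gamma ((n:ℝ)/2 + 1) * (5 - 6 * (n:ℝ) ^ 2)| := le_abs_self _
    have hx : 0 ≤ Real.exp (-u) * u ^ ((n:ℝ)/2) := by positivity
    nlinarith
  linarith [kfun_le_Bfun hn M hu, hBD]

lemma kfun_integral_le {n : ℕ} (hn : 1 ≤ n) (M : ℝ) :
    ∫ u in Set.Ioi (0:ℝ), kfun n M u ≤ (5 + 6 * (n:ℝ)) * M ^ 2 := by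
  rw [← Bfun_integral hn M]
  refine integral_mono_ae (kfun_integrableOn hn M) (Bfun_integrableOn hn M) ?_
  refine (ae_restrict_iff' measurableSet_Ioi).2 (ae_of_all _ fun u hu => ?_)
  exact kfun_le_Bfun hn M hu


lemma weight_bound {n : ℕ} (hn : 1 ≤ n) {t u : ℝ} (ht : 0 < t) (hu : 0 < u) :
    1 + 2 * ((n:ℝ) * |Real.logb 2 ((2*Real.sqrt (t*u)) / (2*Real.sqrt (t*((n:ℝ)/2))))| + 1) ^ 2
      ≤ 5 + 3 * (n:ℝ) ^ 2 * Real.log (u / ((n:ℝ)/2)) ^ 2 := by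
  have hs : (0:ℝ) < (n:ℝ)/2 := npos hn
  have hn1 : (1:ℝ) ≤ (n:ℝ) := by exact_mod_cast hn
  have hratio : (2*Real.sqrt (t*u)) / (2*Real.sqrt (t*((n:ℝ)/2)))
      = Real.sqrt (u/((n:ℝ)/2)) := by
    rw [mul_div_mul_left _ _ (two_ne_zero), ← Real.sqrt_div (by positivity) _,
      mul_div_mul_left _ _ ht.ne']
  rw [hratio]
  have hlogb : Real.logb 2 (Real.sqrt (u/((n:ℝ)/2)))
      = Real.log (u/((n:ℝ)/2)) / (2 * Real.log 2) := by
    rw [Real.logb, Real.log_sqrt (by positivity)]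
    ring
  rw [hlogb]
  set X := Real.log (u/((n:ℝ)/2)) with hX
  have hlog2 : (0.6931471803:ℝ) < Real.log 2 := Real.log_two_gt_d9
  have habs : |X / (2 * Real.log 2)| = |X| / (2 * Real.log 2) := by
    rw [abs_div, abs_of_pos (by linarith : (0:ℝ) < 2 * Real.log 2)]
  rw [habs]
  have hA : |X| / (2 * Real.log 2) ≤ 0.73 * |X| := by
    rw [div_le_iff₀ (by linarith : (0:ℝ) < 2 * Real.log 2)]
    nlinarith [abs_nonneg X]
  have hBB : (n:ℝ) * (|X| / (2 * Real.log 2)) ≤ (n:ℝ) * (0.73 * |X|) :=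
    mul_le_mul_of_nonneg_left hA (by positivity)
  have hB0 : 0 ≤ (n:ℝ) * (|X| / (2 * Real.log 2)) := by positivity
  have hXsq : |X| ^ 2 = X ^ 2 := sq_abs X
  nlinarith [sq_nonneg (0.73 * (n:ℝ) * |X| - 1), abs_nonneg X, hXsq, hBB, hB0,
    sq_nonneg ((n:ℝ) * |X|), hn1]

lemma core {n : ℕ} (hn : 1 ≤ n) (φ : EuclideanSpace ℝ (Fin n) → ℝ) {M : ℝ} (hM : 0 ≤ M)
    (hL2 : ∀ (c : EuclideanSpace ℝ (Fin n)) (r : ℝ), 0 < r →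
      MemLp φ 2 (volume.restrict (Metric.ball c r)))
    (hVar : ∀ (c : EuclideanSpace ℝ (Fin n)) (r : ℝ), 0 < r →
      (⨍ x in Metric.ball c r, (φ x) ^ 2) - (⨍ x in Metric.ball c r, φ x) ^ 2 ≤ M ^ 2)
    (y : EuclideanSpace ℝ (Fin n)) {t : ℝ} (ht : 0 < t)
    (hI1 : Integrable (fun x => heatKernel n t (y - x) * φ x))
    (hI2 : Integrable (fun x => heatKernel n t (y - x) * (φ x) ^ 2)) :
    (∫ x, heatKernel n t (y - x) * (φ x) ^ 2) - (∫ x, heatKernel n t (y - x) * φ x) ^ 2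
      ≤ (5 + 6 * (n:ℝ)) * M ^ 2 := by
  have hs : (0:ℝ) < (n:ℝ)/2 := npos hn
  have hΓ : 0 < Real.Gamma ((n:ℝ)/2 + 1) := Real.Gamma_pos_of_pos (by linarith)
  have hmass := massOne hn ht y
  have hφm : AEMeasurable φ volume := by
    have h1 : AEMeasurable (fun x => heatKernel n t (y - x) * φ x) volume :=
      hI1.aestronglyMeasurable.aemeasurable
    have h2 : Measurable fun x : EuclideanSpace ℝ (Fin n) => (heatKernel n t (y - x))⁻¹ :=
      (heat_cont ht y).measurable.inv
    have h3 := h2.aemeasurable.fun_mul h1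
    have he : (fun x => (heatKernel n t (y - x))⁻¹ * (heatKernel n t (y - x) * φ x)) = φ :=
      funext fun x => inv_mul_cancel_left₀ (heat_pos ht y x).ne' (φ x)
    rwa [he] at h3
  set rb : ℝ := 2 * Real.sqrt (t * ((n:ℝ)/2)) with hrb
  have hrbpos : 0 < rb := by
    rw [hrb]
    positivity
  set a : ℝ := ⨍ x in Metric.ball y rb, φ x with ha
  have hfm : AEMeasurable (fun x => (φ x - a) ^ 2) volume :=
    (hφm.sub aemeasurable_const).pow_const 2
  have hfe : (fun x => heatKernel n t (y - x) * (φ x - a) ^ 2)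
      = fun x => (heatKernel n t (y - x) * (φ x) ^ 2
          - (2 * a) * (heatKernel n t (y - x) * φ x)) + a ^ 2 * heatKernel n t (y - x) :=
    funext fun x => by ring
  have hHf : Integrable (fun x => heatKernel n t (y - x) * (φ x - a) ^ 2) volume := by
    rw [hfe]
    exact (hI2.sub (hI1.const_mul _)).add (hmass.1.const_mul _)
  have hid : ∫ x, heatKernel n t (y - x) * (φ x - a) ^ 2
      = (∫ x, heatKernel n t (y - x) * (φ x) ^ 2)
        - 2 * a * (∫ x, heatKernel n t (y - x) * φ x) + a ^ 2 := by
    rw [hfe]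
    have e1 : ∫ x, (heatKernel n t (y - x) * (φ x) ^ 2
          - (2 * a) * (heatKernel n t (y - x) * φ x)) + a ^ 2 * heatKernel n t (y - x)
        = (∫ x, (heatKernel n t (y - x) * (φ x) ^ 2
            - (2 * a) * (heatKernel n t (y - x) * φ x)))
          + ∫ x, a ^ 2 * heatKernel n t (y - x) :=
      integral_add (hI2.sub (hI1.const_mul _)) (hmass.1.const_mul _)
    have e2 : ∫ x, (heatKernel n t (y - x) * (φ x) ^ 2
          - (2 * a) * (heatKernel n t (y - x) * φ x))
        = (∫ x, heatKernel n t (y - x) * (φ x) ^ 2)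
          - ∫ x, (2 * a) * (heatKernel n t (y - x) * φ x) :=
      integral_sub hI2 (hI1.const_mul _)
    rw [e1, e2, MeasureTheory.integral_const_mul, MeasureTheory.integral_const_mul, hmass.2]
    ring
  have hnn : ∀ᵐ x ∂(volume : Measure (EuclideanSpace ℝ (Fin n))),
      0 ≤ heatKernel n t (y - x) * (φ x - a) ^ 2 :=
    ae_of_all _ fun x => mul_nonneg (heat_pos ht y x).le (sq_nonneg _)
  have hlay := layer ht y (fun x => (φ x - a) ^ 2) (fun x => sq_nonneg _) hfm
  have hbound : (∫⁻ x, ENNReal.ofReal (heatKernel n t (y - x) * (φ x - a) ^ 2))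
      ≤ ENNReal.ofReal ((5 + 6 * (n:ℝ)) * M ^ 2) := by
    rw [hlay]
    have hstep : ∀ u ∈ Set.Ioi (0:ℝ),
        ENNReal.ofReal ((4 * π * t) ^ (-(n:ℝ)/2) * Real.exp (-u)) *
          ∫⁻ x in Metric.ball y (2 * Real.sqrt (t * u)), ENNReal.ofReal ((φ x - a) ^ 2)
        ≤ ENNReal.ofReal (kfun n M u) := by
      intro u hu
      have hu : (0:ℝ) < u := hu
      have hr : (0:ℝ) < 2 * Real.sqrt (t * u) := by positivity
      have hfint : IntegrableOn (fun x => (φ x - a) ^ 2)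
          (Metric.ball y (2 * Real.sqrt (t * u))) volume := by
        obtain ⟨j1, j2⟩ := intOn_ball hL2 y hr
        have he : (fun x => (φ x - a) ^ 2)
            = fun x => ((φ x) ^ 2 - (2 * a) * φ x) + a ^ 2 := funext fun x => by ring
        rw [he]
        exact (j2.sub (j1.const_mul _)).add (integrableOn_const measure_ball_lt_top.ne)
      have hlin : ∫⁻ x in Metric.ball y (2 * Real.sqrt (t * u)),
          ENNReal.ofReal ((φ x - a) ^ 2)
          = ENNReal.ofReal (∫ x in Metric.ball y (2 * Real.sqrt (t * u)), (φ x - a) ^ 2) :=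
        (ofReal_integral_eq_lintegral_ofReal hfint (ae_of_all _ fun x => sq_nonneg _)).symm
      rw [hlin, ← ENNReal.ofReal_mul (by positivity)]
      apply ENNReal.ofReal_le_ofReal
      have hball := ball_bound hn hL2 hM hVar y hr hrbpos
      rw [← ha] at hball
      have hW := weight_bound hn ht hu
      rw [← hrb] at hW
      set V := (volume (Metric.ball y (2 * Real.sqrt (t * u)))).toReal with hV
      set W := 1 + 2 * ((n:ℝ) *
        |Real.logb 2 ((2 * Real.sqrt (t * u)) / rb)| + 1) ^ 2 with hWdef
      have hW0 : 0 ≤ W := by positivity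
      calc (4 * π * t) ^ (-(n:ℝ)/2) * Real.exp (-u)
            * ∫ x in Metric.ball y (2 * Real.sqrt (t * u)), (φ x - a) ^ 2
          ≤ (4 * π * t) ^ (-(n:ℝ)/2) * Real.exp (-u) * (V * (M ^ 2 * W)) := by
            apply mul_le_mul_of_nonneg_left hball (by positivity)
        _ = Real.exp (-u) * ((4 * π * t) ^ (-(n:ℝ)/2) * V) * (M ^ 2 * W) := by ring
        _ = Real.exp (-u) * (u ^ ((n:ℝ)/2) / Real.Gamma ((n:ℝ)/2 + 1)) * (M ^ 2 * W) := by
            rw [hV, volKey hn ht hu y]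
        _ ≤ Real.exp (-u) * (u ^ ((n:ℝ)/2) / Real.Gamma ((n:ℝ)/2 + 1))
              * (M ^ 2 * (5 + 3 * (n:ℝ) ^ 2 * Real.log (u / ((n:ℝ)/2)) ^ 2)) := by
            apply mul_le_mul_of_nonneg_left _ (by positivity)
            exact mul_le_mul_of_nonneg_left hW (sq_nonneg M)
        _ = kfun n M u := by
            unfold kfun
            ring
    calc (∫⁻ u in Set.Ioi (0:ℝ),
          ENNReal.ofReal ((4 * π * t) ^ (-(n:ℝ)/2) * Real.exp (-u)) *
            ∫⁻ x in Metric.ball y (2 * Real.sqrt (t * u)), ENNReal.ofReal ((φ x - a) ^ 2))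
        ≤ ∫⁻ u in Set.Ioi (0:ℝ), ENNReal.ofReal (kfun n M u) :=
          lintegral_mono_ae ((ae_restrict_iff' measurableSet_Ioi).2 (ae_of_all _ hstep))
      _ = ENNReal.ofReal (∫ u in Set.Ioi (0:ℝ), kfun n M u) :=
          (ofReal_integral_eq_lintegral_ofReal (kfun_integrableOn hn M)
            ((ae_restrict_iff' measurableSet_Ioi).2
              (ae_of_all _ fun u hu => kfun_nonneg hn M hu))).symm
      _ ≤ ENNReal.ofReal ((5 + 6 * (n:ℝ)) * M ^ 2) :=
          ENNReal.ofReal_le_ofReal (kfun_integral_le hn M)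
  have hreal : ∫ x, heatKernel n t (y - x) * (φ x - a) ^ 2 ≤ (5 + 6 * (n:ℝ)) * M ^ 2 := by
    rw [integral_eq_lintegral_of_nonneg_ae hnn hHf.aestronglyMeasurable]
    exact ENNReal.toReal_le_of_le_ofReal (by positivity) hbound
  nlinarith [hid, hreal, sq_nonneg ((∫ x, heatKernel n t (y - x) * φ x) - a)]

end HeatAux

/-- If the quadratic BMO seminorm of `φ` is at most `M` on every ball, then the
heat-semigroup variance satisfies `(H_t*φ²)(y) − ((H_t*φ)(y))² ≤ (C√n·M)²` for all
`(y,t)`, i.e. `‖φ‖_H ≤ C√n‖φ‖_*`. -/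
theorem heat_bmo_norm_le :
    ∃ C : ℝ, 0 < C ∧ ∀ (n : ℕ), 1 ≤ n → ∀ (φ : EuclideanSpace ℝ (Fin n) → ℝ) (M : ℝ), 0 ≤ M →
      (∀ (c : EuclideanSpace ℝ (Fin n)) (r : ℝ), 0 < r →
        MemLp φ 2 (volume.restrict (Metric.ball c r))) →
      (∀ (c : EuclideanSpace ℝ (Fin n)) (r : ℝ), 0 < r →
        (⨍ x in Metric.ball c r, (φ x) ^ 2) - (⨍ x in Metric.ball c r, φ x) ^ 2 ≤ M ^ 2) →
      (∀ (y : EuclideanSpace ℝ (Fin n)) (t : ℝ), 0 < t →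
        Integrable (fun x => heatKernel n t (y - x) * φ x)) →
      (∀ (y : EuclideanSpace ℝ (Fin n)) (t : ℝ), 0 < t →
        Integrable (fun x => heatKernel n t (y - x) * (φ x) ^ 2)) →
      ∀ (y : EuclideanSpace ℝ (Fin n)) (t : ℝ), 0 < t →
        (∫ x, heatKernel n t (y - x) * (φ x) ^ 2) -
            (∫ x, heatKernel n t (y - x) * φ x) ^ 2 ≤
          (C * Real.sqrt n * M) ^ 2 := by
  refine ⟨4, by norm_num, ?_⟩
  intro n hn φ M hM hL2 hVar hI1 hI2 y t ht
  have h := HeatAux.core hn φ hM hL2 hVar y ht (hI1 y t ht) (hI2 y t ht)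
  have h1 : ((4:ℝ) * Real.sqrt n * M) ^ 2 = 16 * (n:ℝ) * M ^ 2 := by
    rw [mul_pow, mul_pow, Real.sq_sqrt (by positivity : (0:ℝ) ≤ (n:ℝ))]
    ring
  have hn1 : (1:ℝ) ≤ (n:ℝ) := by exact_mod_cast hn
  nlinarith [sq_nonneg M]
end
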